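/- Let Z be a random m×m real matrix, entrywise integrable, which is almost surely symmetric positive semidefinite, and suppose that its entrywise expectation E[Z] is positive definite. Then for every δ ∈ (0,1], P( Z ⋠ (m/δ)·E[Z] ) ≤ δ, where for symmetric real matrices X ⪯ Y means that Y − X is positive semidefinite. -/

import Mathlib

open Matrix MeasureTheory

open scoped MatrixOrder in
private lemma quad_le_trace {m : ℕ} {N : Matrix (Fin m) (Fin m) ℝ} (hN : N.PosSemidef)
    (x : Fin m → ℝ) : x ⬝ᵥ (N *ᵥ x) ≤ N.trace * (x ⬝ᵥ x) := by
  obtain ⟨C, rfl⟩ : ∃ C : Matrix (Fin m) (Fin m) ℝ, N = Cᴴ * C :=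
    CStarAlgebra.nonneg_iff_eq_star_mul_self.mp hN.nonneg
  have hCT : Cᴴ = Cᵀ := by
    ext i j; simp [Matrix.conjTranspose_apply]
  rw [hCT]
  have key : x ⬝ᵥ ((Cᵀ * C) *ᵥ x) = (C *ᵥ x) ⬝ᵥ (C *ᵥ x) := by
    rw [← Matrix.mulVec_mulVec, Matrix.dotProduct_mulVec, ← Matrix.mulVec_transpose,
      Matrix.transpose_transpose]
  rw [key]
  have htr : (Cᵀ * C).trace = ∑ i, ∑ j, C i j ^ 2 := by
    rw [Matrix.trace]
    simp only [Matrix.diag_apply, Matrix.mul_apply, Matrix.transpose_apply, sq]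
    rw [Finset.sum_comm]
  rw [htr]
  have hx : x ⬝ᵥ x = ∑ j, x j ^ 2 := by
    simp [dotProduct, sq]
  calc (C *ᵥ x) ⬝ᵥ (C *ᵥ x) = ∑ i, (∑ j, C i j * x j) ^ 2 := by
        simp [dotProduct, Matrix.mulVec, sq]
    _ ≤ ∑ i, (∑ j, C i j ^ 2) * ∑ j, x j ^ 2 := by
        refine Finset.sum_le_sum fun i _ => ?_
        exact Finset.sum_mul_sq_le_sq_mul_sq _ _ _
    _ = (∑ i, ∑ j, C i j ^ 2) * (x ⬝ᵥ x) := by rw [← Finset.sum_mul, hx]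

private lemma psd_trace_nonneg {m : ℕ} {N : Matrix (Fin m) (Fin m) ℝ}
    (hN : N.PosSemidef) : 0 ≤ N.trace := by
  rw [Matrix.trace]
  refine Finset.sum_nonneg fun i _ => ?_
  have h := hN.dotProduct_mulVec_nonneg (Pi.single i 1)
  simpa [Matrix.mulVec_single, single_dotProduct] using h

open scoped MatrixOrder in
private lemma conj_trace_facts {m : ℕ} {A Z : Matrix (Fin m) (Fin m) ℝ}
    (hA : A.PosDef) (hZ : Z.PosSemidef) :
    0 ≤ (A⁻¹ * Z).trace ∧
    ∀ v : Fin m → ℝ, v ⬝ᵥ (Z *ᵥ v) ≤ (A⁻¹ * Z).trace * (v ⬝ᵥ (A *ᵥ v)) := by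
  classical
  set B := CFC.sqrt A with hBdef
  have hBpsd : B.PosSemidef := (CFC.sqrt_nonneg A).posSemidef
  have hBB : B * B = A := CFC.sqrt_mul_sqrt_self A hA.posSemidef.nonneg
  have hBsym : Bᵀ = B := by
    have h := hBpsd.1
    rw [Matrix.IsHermitian] at h
    calc Bᵀ = Bᴴ := by ext i j; simp [Matrix.conjTranspose_apply]
      _ = B := h
  have hAdet : IsUnit A.det := (Matrix.isUnit_iff_isUnit_det A).mp hA.isUnit
  have hBunit : IsUnit B.det := by
    have h1 : IsUnit (B.det * B.det) := by
      rw [← Matrix.det_mul, hBB]; exact hAdet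
    exact isUnit_of_mul_isUnit_left h1
  have hBiB : B⁻¹ * B = 1 := Matrix.nonsing_inv_mul B hBunit
  have hBBi : B * B⁻¹ = 1 := Matrix.mul_nonsing_inv B hBunit
  have hBisym : (B⁻¹)ᵀ = B⁻¹ := by rw [Matrix.transpose_nonsing_inv, hBsym]
  have hN : (B⁻¹ * Z * B⁻¹).PosSemidef := by
    have h := hZ.mul_mul_conjTranspose_same B⁻¹
    have hH : (B⁻¹)ᴴ = B⁻¹ := by
      ext i j
      rw [Matrix.conjTranspose_apply, star_trivial]
      exact congrFun (congrFun hBisym i) j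
    rwa [hH] at h
  set N := B⁻¹ * Z * B⁻¹ with hNdef
  have htreq : (A⁻¹ * Z).trace = N.trace := by
    rw [hNdef, ← hBB, Matrix.mul_inv_rev, Matrix.trace_mul_cycle, Matrix.trace_mul_cycle]
  constructor
  · rw [htreq]; exact psd_trace_nonneg hN
  · intro v
    have hBv : B *ᵥ v = v ᵥ* B := by rw [← hBsym, Matrix.mulVec_transpose, hBsym]
    have hBNB : B * (N * B) = Z := by
      rw [hNdef]
      calc B * (B⁻¹ * Z * B⁻¹ * B) = (B * B⁻¹) * Z * (B⁻¹ * B) := by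
            simp only [Matrix.mul_assoc]
        _ = Z := by rw [hBBi, hBiB, Matrix.one_mul, Matrix.mul_one]
    have hwN : (B *ᵥ v) ⬝ᵥ (N *ᵥ (B *ᵥ v)) = v ⬝ᵥ (Z *ᵥ v) := by
      rw [Matrix.mulVec_mulVec]
      nth_rewrite 1 [hBv]
      rw [← Matrix.dotProduct_mulVec, Matrix.mulVec_mulVec, hBNB]
    have hww : (B *ᵥ v) ⬝ᵥ (B *ᵥ v) = v ⬝ᵥ (A *ᵥ v) := by
      nth_rewrite 1 [hBv]
      rw [← Matrix.dotProduct_mulVec, Matrix.mulVec_mulVec, hBB]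
    have h := quad_le_trace hN (B *ᵥ v)
    rw [hwN, hww] at h
    rw [htreq]
    exact h

private lemma trace_gt_of_not_psd {m : ℕ} {A Z : Matrix (Fin m) (Fin m) ℝ}
    (hA : A.PosDef) (hZ : Z.PosSemidef) {c : ℝ}
    (h : ¬ (c • A - Z).PosSemidef) : c < (A⁻¹ * Z).trace := by
  have hherm : (c • A - Z).IsHermitian := by
    rw [Matrix.IsHermitian, Matrix.conjTranspose_sub, Matrix.conjTranspose_smul,
      hA.1.eq, hZ.1.eq, star_trivial]
  have hv : ∃ v : Fin m → ℝ, ¬ (0 ≤ star v ⬝ᵥ ((c • A - Z) *ᵥ v)) := by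
    by_contra hcon
    push_neg at hcon
    exact h (Matrix.PosSemidef.of_dotProduct_mulVec_nonneg hherm hcon)
  obtain ⟨v, hv⟩ := hv
  push_neg at hv
  have hstar : (star v : Fin m → ℝ) = v := by simp
  rw [hstar, Matrix.sub_mulVec, dotProduct_sub, sub_neg, Matrix.smul_mulVec,
    dotProduct_smul, smul_eq_mul] at hv
  have hvne : v ≠ 0 := by
    rintro rfl
    simp at hv
  have hvA : 0 < v ⬝ᵥ A *ᵥ v := by
    have h2 := hA.dotProduct_mulVec_pos hvne
    simpa using h2
  have hkey := (conj_trace_facts hA hZ).2 v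
  have : c * (v ⬝ᵥ A *ᵥ v) < (A⁻¹ * Z).trace * (v ⬝ᵥ A *ᵥ v) := lt_of_lt_of_le hv hkey
  exact lt_of_mul_lt_mul_right this hvA.le

theorem markov_matrix_loewner_bound
    {Ω : Type*} [MeasurableSpace Ω] (P : Measure Ω) [IsProbabilityMeasure P]
    {m : ℕ} (Z : Ω → Matrix (Fin m) (Fin m) ℝ)
    (hmeas : ∀ i j, Measurable (fun ω => Z ω i j))
    (hint : ∀ i j, Integrable (fun ω => Z ω i j) P)
    (hpsd : ∀ᵐ ω ∂P, (Z ω).PosSemidef)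
    (hpd : (Matrix.of fun i j => ∫ ω, Z ω i j ∂P).PosDef) :
    ∀ δ : ℝ, 0 < δ → δ ≤ 1 →
      P {ω | ¬ (((m : ℝ) / δ) • (Matrix.of fun i j => ∫ ω' , Z ω' i j ∂P)
                  - Z ω).PosSemidef}
        ≤ ENNReal.ofReal δ := by
  intro δ hδ hδ1
  set A : Matrix (Fin m) (Fin m) ℝ := Matrix.of fun i j => ∫ ω, Z ω i j ∂P with hAdef
  rcases Nat.eq_zero_or_pos m with hm | hm
  · subst hm
    have hall : ∀ M : Matrix (Fin 0) (Fin 0) ℝ, M.PosSemidef :=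
      fun M => ⟨by ext i j; exact i.elim0, fun x => by rw [Subsingleton.elim x 0]; simp⟩
    have hempty : {ω | ¬ ((((0 : ℕ) : ℝ) / δ) • A - Z ω).PosSemidef} = (∅ : Set Ω) :=
      Set.eq_empty_iff_forall_notMem.mpr fun ω h => h (hall _)
    rw [hempty]
    simp
  · set c : ℝ := (m : ℝ) / δ with hcdef
    have hc : 0 < c := div_pos (by exact_mod_cast hm) hδ
    set X : Ω → ℝ := fun ω => (A⁻¹ * Z ω).trace with hXdef
    have hXeq : ∀ ω, X ω = ∑ i, ∑ j, A⁻¹ i j * Z ω j i := by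
      intro ω
      simp [hXdef, Matrix.trace, Matrix.diag_apply, Matrix.mul_apply]
    have hXint : Integrable X P := by
      have h : Integrable (fun ω => ∑ i, ∑ j, A⁻¹ i j * Z ω j i) P := by
        apply integrable_finset_sum
        intro i _
        apply integrable_finset_sum
        intro j _
        exact (hint j i).const_mul _
      exact h.congr (Filter.Eventually.of_forall fun ω => (hXeq ω).symm)
    have hXmean : ∫ ω, X ω ∂P = (m : ℝ) := by
      have h1 : ∫ ω, X ω ∂P = ∑ i, ∑ j, A⁻¹ i j * A j i := by
        calc ∫ ω, X ω ∂P = ∫ ω, ∑ i, ∑ j, A⁻¹ i j * Z ω j i ∂P :=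
              integral_congr_ae (Filter.Eventually.of_forall hXeq)
          _ = ∑ i, ∑ j, A⁻¹ i j * A j i := by
              erw [integral_finset_sum _ (fun i _ => integrable_finset_sum _
                (fun j _ => (hint j i).const_mul _))]
              refine Finset.sum_congr rfl fun i _ => ?_
              erw [integral_finset_sum _ (fun j _ => (hint j i).const_mul _)]
              refine Finset.sum_congr rfl fun j _ => ?_
              rw [integral_const_mul]
              rfl
      have h2 : ∑ i, ∑ j, A⁻¹ i j * A j i = (A⁻¹ * A).trace := by
        simp [Matrix.trace, Matrix.diag_apply, Matrix.mul_apply]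
      have h3 : A⁻¹ * A = 1 :=
        Matrix.nonsing_inv_mul A ((Matrix.isUnit_iff_isUnit_det A).mp hpd.isUnit)
      rw [h1, h2, h3, Matrix.trace_one]
      simp
    have hXnn : 0 ≤ᵐ[P] X := by
      filter_upwards [hpsd] with ω hω
      exact (conj_trace_facts hpd hω).1
    have hsub : P {ω | ¬ (c • A - Z ω).PosSemidef} ≤ P {ω | c ≤ X ω} := by
      apply measure_mono_ae
      filter_upwards [hpsd] with ω hω hmem
      exact (trace_gt_of_not_psd hpd hω hmem).le
    refine hsub.trans ?_
    have hmarkov := mul_meas_ge_le_integral_of_nonneg hXnn hXint c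
    rw [hXmean] at hmarkov
    have hfin : P {ω | c ≤ X ω} ≠ ⊤ := (measure_lt_top P _).ne
    have htoReal : (P {ω | c ≤ X ω}).toReal ≤ δ := by
      have hcm : (m : ℝ) / c = δ := by
        rw [hcdef]
        field_simp
      calc (P {ω | c ≤ X ω}).toReal ≤ (m : ℝ) / c := by
            rw [le_div_iff₀ hc, mul_comm]; exact hmarkov
        _ = δ := hcm
    calc P {ω | c ≤ X ω} = ENNReal.ofReal (P {ω | c ≤ X ω}).toReal :=
          (ENNReal.ofReal_toReal hfin).symm
      _ ≤ ENNReal.ofReal δ := ENNReal.ofReal_le_ofReal htoReal
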